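/- Let $A$ be a unital associative ring and let $m, n$ be integers with $m, n > 1$. Then for all $a_1, \dots, a_m, b_1, \dots, b_n \in A$, the product $[a_1, \dots, a_m][b_1, \dots, b_n]$ belongs to $T^{(m+n-2)}(A)$. -/

import Mathlib

/-- The ring commutator `[a, b] = a * b - b * a`. -/
def brk {A : Type*} [NonUnitalNonAssocRing A] (a b : A) : A := a * b - b * a

/-- The left-normed commutator `[a 0, a 1, ..., a (k-1)]`. -/
def lnc {A : Type*} [NonUnitalNonAssocRing A] : ∀ {k : ℕ}, (Fin k → A) → A
  | 0, _ => 0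
  | 1, a => a 0
  | k + 2, a => brk (lnc (Fin.init a)) (a (Fin.last (k + 1)))

/-- `T A m` is the two-sided ideal of `A` generated by all left-normed commutators
of length `m` (for `m = 1` this is all of `A`). -/
def T (A : Type*) [NonUnitalNonAssocRing A] (m : ℕ) : TwoSidedIdeal A :=
  TwoSidedIdeal.span {x | ∃ a : Fin m → A, x = lnc a}

namespace GuptaLevin

variable {A : Type*} [Ring A]

/-- Left-normed commutator as a fold over a list: `lncL x [a,b,c] = [[[x,a],b],c]`. -/
def lncL (x : A) : List A → A
  | [] => x
  | e :: t => lncL (brk x e) t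

@[simp] lemma lncL_nil (x : A) : lncL x [] = x := rfl

@[simp] lemma lncL_cons (x e : A) (t : List A) : lncL x (e :: t) = lncL (brk x e) t := rfl

lemma lncL_append (x : A) (l l' : List A) : lncL x (l ++ l') = lncL (lncL x l) l' := by
  induction l generalizing x with
  | nil => rfl
  | cons e t ih => simp [ih]

lemma lncL_concat (x : A) (l : List A) (e : A) : lncL x (l ++ [e]) = brk (lncL x l) e := by
  rw [lncL_append]; rfl

lemma brk_add_left (x y e : A) : brk (x + y) e = brk x e + brk y e := by
  simp [brk]; noncomm_ring

lemma brk_neg_left (x e : A) : brk (-x) e = -(brk x e) := by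
  simp [brk]; noncomm_ring

lemma brk_zero_left (e : A) : brk 0 e = 0 := by simp [brk]

lemma lncL_add (x y : A) (l : List A) : lncL (x + y) l = lncL x l + lncL y l := by
  induction l generalizing x y with
  | nil => rfl
  | cons e t ih => simp [brk_add_left, ih]

lemma lncL_neg (x : A) (l : List A) : lncL (-x) l = -(lncL x l) := by
  induction l generalizing x with
  | nil => rfl
  | cons e t ih => simp [brk_neg_left, ih]

lemma lncL_zero (l : List A) : lncL (0 : A) l = 0 := by
  induction l with
  | nil => rfl
  | cons e t ih => simp [brk_zero_left, ih]

lemma lncL_sub (x y : A) (l : List A) : lncL (x - y) l = lncL x l - lncL y l := by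
  rw [sub_eq_add_neg, lncL_add, lncL_neg, sub_eq_add_neg]

/-- `lnc` in terms of `lncL`. -/
lemma lnc_eq_lncL : ∀ (k : ℕ) (a : Fin (k + 1) → A),
    lnc a = lncL (a 0) (List.ofFn fun i : Fin k => a i.succ)
  | 0, a => by simp [lnc]
  | (k + 1), a => by
    have h1 : lnc a = brk (lnc (Fin.init a)) (a (Fin.last (k + 1))) := rfl
    rw [h1, lnc_eq_lncL k (Fin.init a),
      List.ofFn_succ' (f := fun i : Fin (k + 1) => a i.succ),
      List.concat_eq_append, lncL_concat]
    congr 2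

lemma mem_T_lncL (x : A) (l : List A) : lncL x l ∈ T A (l.length + 1) := by
  apply TwoSidedIdeal.subset_span
  refine ⟨(x :: l).get, ?_⟩
  rw [lnc_eq_lncL l.length ((x :: l).get)]
  have h2 : (List.ofFn fun i : Fin l.length => (x :: l).get i.succ) = l := by
    have : (fun i : Fin l.length => (x :: l).get i.succ) = l.get := by
      funext i; simp
    rw [this, List.ofFn_get]
  rw [h2]
  rfl

lemma brk_mem {I : TwoSidedIdeal A} {x : A} (hx : x ∈ I) (e : A) : brk x e ∈ I :=
  I.sub_mem (I.mul_mem_right _ _ hx) (I.mul_mem_left _ _ hx)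

lemma lncL_mem {I : TwoSidedIdeal A} {x : A} (hx : x ∈ I) (l : List A) : lncL x l ∈ I := by
  induction l generalizing x with
  | nil => exact hx
  | cons e t ih => exact ih (brk_mem hx e)

lemma mem_T_mono {j k : ℕ} (hj : 1 ≤ j) (hjk : j ≤ k) {z : A} (hz : z ∈ T A k) : z ∈ T A j := by
  rw [T, TwoSidedIdeal.mem_span_iff] at hz
  apply hz
  rintro w ⟨a, rfl⟩
  obtain ⟨k', rfl⟩ : ∃ k', k = k' + 1 := ⟨k - 1, by omega⟩
  obtain ⟨j', rfl⟩ : ∃ j', j = j' + 1 := ⟨j - 1, by omega⟩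
  rw [lnc_eq_lncL k' a]
  set l : List A := List.ofFn fun i : Fin k' => a i.succ with hl
  have hlen : l.length = k' := by simp [hl]
  have hsplit : l = l.take j' ++ l.drop j' := (List.take_append_drop j' l).symm
  rw [hsplit, lncL_append]
  have h1 : lncL (a 0) (l.take j') ∈ T A (j' + 1) := by
    have := mem_T_lncL (a 0) (l.take j')
    rwa [List.length_take, min_eq_left (by omega)] at this
  exact lncL_mem h1 _

lemma T_cast {j k : ℕ} (h : j = k) {z : A} (hz : z ∈ T A j) : z ∈ T A k := h ▸ hz

/-- The additive subgroup generated by left-normed commutators of length `j`. -/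
def Sg (j : ℕ) : AddSubgroup A :=
  AddSubgroup.closure {x | ∃ (h : A) (l : List A), l.length + 1 = j ∧ x = lncL h l}

lemma mem_Sg_lncL {j : ℕ} (h : A) {l : List A} (hl : l.length + 1 = j) : lncL h l ∈ Sg j :=
  AddSubgroup.subset_closure ⟨h, l, hl, rfl⟩

lemma Sg_mem_T {j : ℕ} {z : A} (hz : z ∈ Sg (A := A) j) : z ∈ T A j := by
  induction hz using AddSubgroup.closure_induction with
  | mem w hw => obtain ⟨h, l, hl, rfl⟩ := hw; exact T_cast hl (mem_T_lncL h l)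
  | zero => exact (T A j).zero_mem
  | add x y _ _ hx hy => exact (T A j).add_mem hx hy
  | neg x _ hx => exact (T A j).neg_mem hx

lemma Sg_brk_single {a : ℕ} {z : A} (hz : z ∈ Sg (A := A) a) (e : A) :
    brk z e ∈ Sg (A := A) (a + 1) := by
  induction hz using AddSubgroup.closure_induction with
  | mem w hw =>
    obtain ⟨h, l, hl, rfl⟩ := hw
    rw [← lncL_concat]
    exact mem_Sg_lncL h (by simp; omega)
  | zero => rw [brk_zero_left]; exact (Sg (a+1)).zero_mem
  | add x y _ _ hx hy => rw [brk_add_left]; exact (Sg (a+1)).add_mem hx hy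
  | neg x _ hx => rw [brk_neg_left]; exact (Sg (a+1)).neg_mem hx

lemma jacobi (x y z : A) : brk x (brk y z) = brk (brk x y) z - brk (brk x z) y := by
  simp only [brk]; noncomm_ring

lemma Sg_brk_lncL : ∀ (l' : List A) (h' : A) (a : ℕ) (z : A), z ∈ Sg (A := A) a →
    brk z (lncL h' l') ∈ Sg (A := A) (a + l'.length + 1) := by
  intro l'
  induction l' using List.reverseRecOn with
  | nil =>
    intro h' a z hz
    simpa using Sg_brk_single hz h'
  | append_singleton t e ih =>
    intro h' a z hz
    rw [lncL_concat, jacobi]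
    apply AddSubgroup.sub_mem
    · have h1 := Sg_brk_single (ih h' a z hz) e
      refine (by simp; omega : a + t.length + 1 + 1 = a + (t ++ [e]).length + 1) ▸ h1
    · have h1 := ih h' (a + 1) (brk z e) (Sg_brk_single hz e)
      refine (by simp; omega : a + 1 + t.length + 1 = a + (t ++ [e]).length + 1) ▸ h1

/-- Key ring identities. -/
lemma id_mul_brk (u r g : A) : u * brk r g = brk (u * r) g - brk u g * r := by
  simp only [brk]; noncomm_ring

lemma id_brk_mul_right (p c q : A) : brk p c * q = brk p (c * q) - c * brk p q := by
  simp only [brk]; noncomm_ring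

lemma id_brk_of_mul (w L g : A) : brk (w * L) g = w * brk L g + brk w g * L := by
  simp only [brk]; noncomm_ring

lemma id_mul_comm (w L : A) : w * L = L * w + brk w L := by
  simp only [brk]; noncomm_ring

section Induction

variable (n : ℕ)

/-- Shape of the inductive hypothesis: all instances of the main statement with second
commutator of length `< n`. -/
def IHyp : Prop := ∀ (x y : A) (xs ys : List A), 1 ≤ xs.length → 1 ≤ ys.length →
    ys.length + 2 ≤ n → lncL x xs * lncL y ys ∈ T A (xs.length + ys.length)

variable {n}

lemma Gaux (IH : IHyp (A := A) n) : ∀ (gs ws ls : List A) (c d : A), 1 ≤ ls.length →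
    ws.length + gs.length + 2 ≤ n →
    lncL (lncL c ws * lncL d ls) gs ∈ T A (ws.length + ls.length + gs.length) := by
  intro gs
  induction gs with
  | nil =>
    intro ws ls c d hls hn
    simp only [lncL_nil, List.length_nil, Nat.add_zero]
    match ws with
    | [] =>
      simp only [lncL_nil, List.length_nil, Nat.zero_add]
      have h1 : lncL d ls ∈ T A ls.length :=
        mem_T_mono hls (by omega) (mem_T_lncL d ls)
      exact (T A ls.length).mul_mem_left _ _ h1
    | w0 :: ws' =>
      rw [id_mul_comm]
      apply (T _ _).add_mem
      · -- L * w via IH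
        have h1 := IH d c ls (w0 :: ws') hls (by simp) (by simpa using hn)
        exact T_cast (by omega) h1
      · -- brk w L ∈ Sg (high)
        have h1 := Sg_brk_lncL ls d (ws'.length + 2) _
          (mem_Sg_lncL c (rfl : (w0 :: ws').length + 1 = ws'.length + 2))
        have h2 := Sg_mem_T h1
        exact mem_T_mono (by simp; omega) (by simp; omega) h2
  | cons g gs ih =>
    intro ws ls c d hls hn
    rw [lncL_cons, id_brk_of_mul, lncL_add]
    apply (T _ _).add_mem
    · -- w * [L,g]
      have h1 : brk (lncL d ls) g = lncL d (ls ++ [g]) := (lncL_concat d ls g).symm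
      rw [h1]
      have h2 := ih ws (ls ++ [g]) c d (by simp) (by simp at hn ⊢; omega)
      refine T_cast (by simp; omega) h2
    · -- [w,g] * L
      have h1 : brk (lncL c ws) g = lncL c (ws ++ [g]) := (lncL_concat c ws g).symm
      rw [h1]
      have h2 := ih (ws ++ [g]) ls c d hls (by simp at hn ⊢; omega)
      refine T_cast (by simp; omega) h2

lemma CmulS (IH : IHyp (A := A) n) (j : ℕ) (z : A) (hz : z ∈ Sg (A := A) (j + 2))
    (c : A) (gs : List A) (hn : gs.length + 2 ≤ n) :
    lncL (c * z) gs ∈ T A (j + 1 + gs.length) := by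
  induction hz using AddSubgroup.closure_induction with
  | mem w hw =>
    obtain ⟨d, ls, hl, rfl⟩ := hw
    have h1 := Gaux IH gs [] ls c d (by omega) (by simpa using hn)
    simp only [List.length_nil, Nat.zero_add] at h1
    exact T_cast (by omega) h1
  | zero =>
    rw [mul_zero, lncL_zero]
    exact (T _ _).zero_mem
  | add u v _ _ hu hv =>
    rw [mul_add, lncL_add]
    exact (T _ _).add_mem hu hv
  | neg u _ hu =>
    rw [mul_neg, lncL_neg]
    exact (T _ _).neg_mem hu

lemma Eaux (IH : IHyp (A := A) n) : ∀ (ys xs gs : List A) (x y : A), 1 ≤ xs.length →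
    1 ≤ ys.length → 1 ≤ gs.length → ys.length + gs.length + 1 ≤ n →
    lncL (lncL x xs * lncL y ys) gs ∈ T A (xs.length + ys.length + gs.length) := by
  intro ys
  induction ys using List.reverseRecOn with
  | nil => intro xs gs x y _ h2 _ _; simp at h2
  | append_singleton ys' g0 ih =>
    intro xs gs x y hxs hys hgs hn
    rcases List.eq_nil_or_concat' ys' with hys' | ⟨ys'', c', hys'⟩
    · -- base case: ys = [g0], second commutator has length 2
      subst hys'
      rcases List.eq_nil_or_concat' xs with hxs' | ⟨xs', c, hxs'⟩
      · subst hxs'; simp at hxs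
      · subst hxs'
        simp only [List.nil_append]
        have key : lncL x (xs' ++ [c]) * lncL y [g0] =
            brk (lncL x xs') (c * brk y g0) - c * brk (lncL x xs') (brk y g0) := by
          rw [lncL_concat x xs' c]
          have h0 : lncL y [g0] = brk y g0 := rfl
          rw [h0, id_brk_mul_right]
        rw [key, lncL_sub]
        apply (T _ _).sub_mem
        · -- honest commutator term
          have h1 : brk (lncL x xs') (c * brk y g0) = lncL x (xs' ++ [c * brk y g0]) :=
            (lncL_concat x xs' (c * brk y g0)).symm
          rw [h1, ← lncL_append]
          have h2 := mem_T_lncL x ((xs' ++ [c * brk y g0]) ++ gs)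
          exact T_cast (by simp; omega) h2
        · -- coefficient times Lie element
          have hpq : brk (lncL x xs') (brk y g0) ∈ Sg (A := A) (xs'.length + 1 + 1 + 1) := by
            have h0 : brk y g0 = lncL y [g0] := rfl
            rw [h0]
            exact Sg_brk_lncL [g0] y (xs'.length + 1) _ (mem_Sg_lncL x rfl)
          have h3 := CmulS IH (xs'.length + 1) _ (by exact_mod_cast hpq) c gs
            (by simp at hn; omega)
          exact T_cast (by simp only [List.length_append, List.length_cons,
            List.length_nil]) h3
    · -- inductive step: peel the last entry of the second commutator
      subst hys'
      have key : lncL x xs * lncL y ((ys'' ++ [c']) ++ [g0]) =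
          brk (lncL x xs * lncL y (ys'' ++ [c'])) g0 -
            brk (lncL x xs) g0 * lncL y (ys'' ++ [c']) := by
        rw [lncL_concat y (ys'' ++ [c']) g0, id_mul_brk]
      rw [key, lncL_sub]
      apply (T _ _).sub_mem
      · -- [u*r, g0, gs...]
        have h1 : lncL (brk (lncL x xs * lncL y (ys'' ++ [c'])) g0) gs =
            lncL (lncL x xs * lncL y (ys'' ++ [c'])) (g0 :: gs) := rfl
        rw [h1]
        have h2 := ih xs (g0 :: gs) x y hxs (by simp) (by simp) (by simp at hn ⊢; omega)
        exact T_cast (by simp; omega) h2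
      · -- [u, g0] * r
        have h1 : brk (lncL x xs) g0 = lncL x (xs ++ [g0]) := (lncL_concat x xs g0).symm
        rw [h1]
        have h2 := ih (xs ++ [g0]) gs x y (by simp) (by simp) hgs (by simp at hn ⊢; omega)
        exact T_cast (by simp; omega) h2

end Induction

lemma mainS : ∀ (n : ℕ) (x y : A) (xs ys : List A), 1 ≤ xs.length → ys.length + 1 = n →
    lncL x xs * lncL y ys ∈ T A (xs.length + ys.length) := by
  intro n
  induction n using Nat.strong_induction_on with
  | _ n IH =>
    intro x y xs ys hxs hys
    have IH' : IHyp (A := A) n := by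
      intro x' y' xs' ys' h1 h2 h3
      exact IH (ys'.length + 1) (by omega) x' y' xs' ys' h1 rfl
    by_cases hshort : ys.length ≤ 1
    · have h1 := (T A (xs.length + 1)).mul_mem_right _ (lncL y ys) (mem_T_lncL x xs)
      have h2 : 1 ≤ xs.length + ys.length := by omega
      have h3 : xs.length + ys.length ≤ xs.length + 1 := by omega
      exact mem_T_mono h2 h3 h1
    · rcases List.eq_nil_or_concat' ys with h | ⟨ys', f, rfl⟩
      · subst h; simp at hshort
      · have hys' : 1 ≤ ys'.length := by
          cases ys' with
          | nil => simp at hshort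
          | cons a t => simp
        have key : lncL x xs * lncL y (ys' ++ [f]) =
            brk (lncL x xs * lncL y ys') f - brk (lncL x xs) f * lncL y ys' := by
          rw [lncL_concat y ys' f, id_mul_brk]
        rw [key]
        apply (T _ _).sub_mem
        · have h1 : brk (lncL x xs * lncL y ys') f = lncL (lncL x xs * lncL y ys') [f] := rfl
          rw [h1]
          have h2 := Eaux IH' ys' xs [f] x y hxs hys' (by simp) (by simp at hys ⊢; omega)
          exact T_cast (by simp; omega) h2
        · have h1 : brk (lncL x xs) f = lncL x (xs ++ [f]) := (lncL_concat x xs f).symm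
          rw [h1]
          have h2 := IH' x y (xs ++ [f]) ys' (by simp) hys' (by simp at hys ⊢; omega)
          exact T_cast (by simp; omega) h2

end GuptaLevin

theorem comm_mul_comm_mem {A : Type*} [Ring A] (m n : ℕ) (hm : 1 < m) (hn : 1 < n)
    (a : Fin m → A) (b : Fin n → A) :
    lnc a * lnc b ∈ T A (m + n - 2) := by
  obtain ⟨m', rfl⟩ : ∃ m', m = m' + 1 := ⟨m - 1, by omega⟩
  obtain ⟨n', rfl⟩ : ∃ n', n = n' + 1 := ⟨n - 1, by omega⟩
  rw [GuptaLevin.lnc_eq_lncL m' a, GuptaLevin.lnc_eq_lncL n' b]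
  have h := GuptaLevin.mainS (n' + 1) (a 0) (b 0)
    (List.ofFn fun i : Fin m' => a i.succ) (List.ofFn fun i : Fin n' => b i.succ)
    (by simp; omega) (by simp)
  exact GuptaLevin.T_cast (by simp; omega) h
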